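/- (Convergence of in-sample soft policy iteration) Let π₀ be any policy with π₀ ⪯ β, and define recursively for t ≥ 0: q_t as the unique function satisfying q_t = T^{π_t} q_t, and π_{t+1}(a|s) = exp(q_t(s,a)/τ) / Σ_{a' ∈ supp β(·|s)} exp(q_t(s,a')/τ) for a ∈ supp β(·|s) and 0 otherwise. Then every π_t satisfies π_t ⪯ β, the sequence q_t is pointwise nondecreasing, and q_t converges pointwise to the unique fixed point q̃*_β of the in-sample softmax optimality operator T*_β. -/

import Mathlib

open Finset

/-- The in-sample softmax optimality operator
`(T*_β q)(s,a) = r(s,a) + γ ∑_{s'} P(s,a)(s') · τ log ∑_{a' ∈ supp β(·|s')} exp(q(s',a')/τ)`. -/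
noncomputable def Tstar {S A : Type*} [Fintype S] [Fintype A]
    (r : S → A → ℝ) (γ τ : ℝ) (P : S → A → S → ℝ) (β : S → A → ℝ)
    (q : S → A → ℝ) : S → A → ℝ := fun s a =>
  r s a + γ * ∑ s', P s a s' *
    (τ * Real.log (∑ a' ∈ Finset.univ.filter (fun a' => 0 < β s' a'), Real.exp (q s' a' / τ)))

/-- The on-policy entropy-regularized Bellman operator
`(T^π q)(s,a) = r(s,a) + γ ∑_{s'} P(s,a)(s') ∑_{a' ∈ supp π(·|s')} π(a'|s')(q(s',a') − τ log π(a'|s'))`. -/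
noncomputable def Ton {S A : Type*} [Fintype S] [Fintype A]
    (r : S → A → ℝ) (γ τ : ℝ) (P : S → A → S → ℝ) (π : S → A → ℝ)
    (q : S → A → ℝ) : S → A → ℝ := fun s a =>
  r s a + γ * ∑ s', P s a s' *
    (∑ a' ∈ Finset.univ.filter (fun a' => 0 < π s' a'),
      π s' a' * (q s' a' - τ * Real.log (π s' a')))



set_option linter.unusedSectionVars false
set_option maxHeartbeats 1000000

section myhelpers

variable {A : Type*} [Fintype A]

private lemma sum_exp_pos (τ : ℝ) (D : Finset A) (hD : D.Nonempty) (q : A → ℝ) :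
    0 < ∑ a ∈ D, Real.exp (q a / τ) :=
  Finset.sum_pos (fun a _ => Real.exp_pos _) hD

private lemma lse_le (τ : ℝ) (hτ : 0 < τ) (D : Finset A) (hD : D.Nonempty)
    (q q' : A → ℝ) (c : ℝ) (h : ∀ a ∈ D, q a ≤ q' a + c) :
    τ * Real.log (∑ a ∈ D, Real.exp (q a / τ)) ≤
      τ * Real.log (∑ a ∈ D, Real.exp (q' a / τ)) + c := by
  have hp := sum_exp_pos τ D hD q
  have hp' := sum_exp_pos τ D hD q'
  have h1 : (∑ a ∈ D, Real.exp (q a / τ)) ≤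
      Real.exp (c / τ) * ∑ a ∈ D, Real.exp (q' a / τ) := by
    rw [Finset.mul_sum]
    refine Finset.sum_le_sum fun a ha => ?_
    rw [← Real.exp_add, ← add_div]
    refine Real.exp_le_exp.2 ?_; have := h a ha; gcongr; linarith
  have h2 := Real.log_le_log hp h1
  rw [Real.log_mul (Real.exp_ne_zero _) (ne_of_gt hp'), Real.log_exp] at h2
  have h3 := mul_le_mul_of_nonneg_left h2 hτ.le
  rw [mul_add, mul_div_cancel₀ _ (ne_of_gt hτ)] at h3
  linarith

variable {A : Type*} [Fintype A]

private lemma gibbs (τ : ℝ) (hτ : 0 < τ) (D : Finset A) (hD : D.Nonempty) (π : A → ℝ)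
    (hsum : ∑ a ∈ Finset.univ.filter (fun a => 0 < π a), π a = 1)
    (hsub : ∀ a, 0 < π a → a ∈ D) (q : A → ℝ) :
    ∑ a ∈ Finset.univ.filter (fun a => 0 < π a), π a * (q a - τ * Real.log (π a)) ≤
      τ * Real.log (∑ a ∈ D, Real.exp (q a / τ)) := by
  set Z : ℝ := ∑ a ∈ D, Real.exp (q a / τ) with hZdef
  have hZ : 0 < Z := sum_exp_pos τ D hD q
  have per : ∀ a ∈ Finset.univ.filter (fun a => 0 < π a),
      π a * (q a - τ * Real.log (π a)) ≤
        (τ / Z) * Real.exp (q a / τ) + (τ * Real.log Z - τ) * π a := by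
    intro a ha
    have hπa : 0 < π a := (Finset.mem_filter.1 ha).2
    have hx : 0 < Real.exp (q a / τ) / (π a * Z) := by positivity
    have hlog := Real.log_le_sub_one_of_pos hx
    have hlx : Real.log (Real.exp (q a / τ) / (π a * Z)) =
        q a / τ - Real.log (π a) - Real.log Z := by
      rw [Real.log_div (Real.exp_ne_zero _) (by positivity), Real.log_exp,
        Real.log_mul (ne_of_gt hπa) (ne_of_gt hZ)]
      ring
    rw [hlx] at hlog
    calc π a * (q a - τ * Real.log (π a))
        = τ * π a * (q a / τ - Real.log (π a)) := by field_simp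
      _ ≤ τ * π a * (Real.exp (q a / τ) / (π a * Z) - 1 + Real.log Z) := by
          refine mul_le_mul_of_nonneg_left ?_ (by positivity)
          linarith
      _ = (τ / Z) * Real.exp (q a / τ) + (τ * Real.log Z - τ) * π a := by
          field_simp
          ring
  calc ∑ a ∈ Finset.univ.filter (fun a => 0 < π a), π a * (q a - τ * Real.log (π a))
      ≤ ∑ a ∈ Finset.univ.filter (fun a => 0 < π a),
          ((τ / Z) * Real.exp (q a / τ) + (τ * Real.log Z - τ) * π a) :=
        Finset.sum_le_sum per
    _ = (τ / Z) * (∑ a ∈ Finset.univ.filter (fun a => 0 < π a), Real.exp (q a / τ))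
          + (τ * Real.log Z - τ) * (∑ a ∈ Finset.univ.filter (fun a => 0 < π a), π a) := by
        rw [Finset.sum_add_distrib, Finset.mul_sum, Finset.mul_sum]
    _ ≤ τ * Real.log Z := by
        rw [hsum, mul_one]
        have hsub' : (∑ a ∈ Finset.univ.filter (fun a => 0 < π a), Real.exp (q a / τ)) ≤ Z := by
          refine Finset.sum_le_sum_of_subset_of_nonneg ?_ (fun _ _ _ => (Real.exp_pos _).le)
          intro a ha
          exact hsub a (Finset.mem_filter.1 ha).2
        have h1 : (τ / Z) * (∑ a ∈ Finset.univ.filter (fun a => 0 < π a), Real.exp (q a / τ))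
            ≤ (τ / Z) * Z := mul_le_mul_of_nonneg_left hsub' (by positivity)
        rw [div_mul_cancel₀ _ (ne_of_gt hZ)] at h1
        linarith

private lemma softmax_facts (τ : ℝ) (hτ : 0 < τ) (D : Finset A) (hD : D.Nonempty)
    (q : A → ℝ) (π : A → ℝ)
    (hπ : ∀ a ∈ D, π a = Real.exp (q a / τ) / (∑ a' ∈ D, Real.exp (q a' / τ)))
    (hπ' : ∀ a, a ∉ D → π a = 0) :
    (Finset.univ.filter (fun a => 0 < π a)) = D ∧ (∀ a, 0 ≤ π a) ∧
    (∑ a ∈ D, π a = 1) ∧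
    (∑ a ∈ D, π a * (q a - τ * Real.log (π a)) =
      τ * Real.log (∑ a' ∈ D, Real.exp (q a' / τ))) := by
  set Z : ℝ := ∑ a' ∈ D, Real.exp (q a' / τ) with hZdef
  have hZ : 0 < Z := sum_exp_pos τ D hD q
  have hpos : ∀ a ∈ D, 0 < π a := by
    intro a ha; rw [hπ a ha]; positivity
  have hfilt : (Finset.univ.filter (fun a => 0 < π a)) = D := by
    ext a
    simp only [Finset.mem_filter, Finset.mem_univ, true_and]
    constructor
    · intro h
      by_contra hc
      rw [hπ' a hc] at h
      exact lt_irrefl _ h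
    · exact hpos a
  have hnn : ∀ a, 0 ≤ π a := by
    intro a
    by_cases h : a ∈ D
    · exact (hpos a h).le
    · rw [hπ' a h]
  have hsum1 : ∑ a ∈ D, π a = 1 := by
    have : ∑ a ∈ D, π a = ∑ a ∈ D, Real.exp (q a / τ) / Z :=
      Finset.sum_congr rfl fun a ha => hπ a ha
    rw [this, ← Finset.sum_div, div_self (ne_of_gt hZ)]
  refine ⟨hfilt, hnn, hsum1, ?_⟩
  have hval : ∀ a ∈ D, π a * (q a - τ * Real.log (π a)) = π a * (τ * Real.log Z) := by
    intro a ha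
    have hl : Real.log (π a) = q a / τ - Real.log Z := by
      rw [hπ a ha, Real.log_div (Real.exp_ne_zero _) (ne_of_gt hZ), Real.log_exp]
    rw [hl]
    have : q a - τ * (q a / τ - Real.log Z) = τ * Real.log Z := by
      field_simp
      ring
    rw [this]
  rw [Finset.sum_congr rfl hval, ← Finset.sum_mul, hsum1, one_mul]

variable {A : Type*} [Fintype A]

private lemma pol_sum_le (τ c : ℝ) (π : A → ℝ) (hπ0 : ∀ a, 0 ≤ π a)
    (hsum : ∑ a ∈ Finset.univ.filter (fun a => 0 < π a), π a = 1)
    (q q' : A → ℝ) (h : ∀ a, q a ≤ q' a + c) :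
    ∑ a ∈ Finset.univ.filter (fun a => 0 < π a), π a * (q a - τ * Real.log (π a)) ≤
      (∑ a ∈ Finset.univ.filter (fun a => 0 < π a), π a * (q' a - τ * Real.log (π a))) + c := by
  have per : ∀ a ∈ Finset.univ.filter (fun a => 0 < π a),
      π a * (q a - τ * Real.log (π a)) ≤
        π a * (q' a - τ * Real.log (π a)) + π a * c := by
    intro a _
    have h1 : π a * (q a - τ * Real.log (π a)) ≤ π a * (q' a + c - τ * Real.log (π a)) :=
      mul_le_mul_of_nonneg_left (by linarith [h a]) (hπ0 a)
    have h2 : π a * (q' a + c - τ * Real.log (π a)) =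
        π a * (q' a - τ * Real.log (π a)) + π a * c := by ring
    linarith
  calc ∑ a ∈ Finset.univ.filter (fun a => 0 < π a), π a * (q a - τ * Real.log (π a))
      ≤ ∑ a ∈ Finset.univ.filter (fun a => 0 < π a),
          (π a * (q' a - τ * Real.log (π a)) + π a * c) := Finset.sum_le_sum per
    _ = (∑ a ∈ Finset.univ.filter (fun a => 0 < π a), π a * (q' a - τ * Real.log (π a)))
          + (∑ a ∈ Finset.univ.filter (fun a => 0 < π a), π a) * c := by
        rw [Finset.sum_add_distrib, Finset.sum_mul]
    _ = _ := by rw [hsum, one_mul]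

end myhelpers

/-- Convergence of in-sample soft policy iteration: starting from any policy `π₀ ⪯ β`, the
iterates of policy evaluation (`q_t = T^{π_t} q_t`) and in-sample softmax policy improvement
all satisfy `π_t ⪯ β`, the values `q_t` are pointwise nondecreasing, and `q_t` converges
pointwise to the unique fixed point of the in-sample softmax optimality operator `T*_β`. -/
theorem insample_soft_policy_iteration_converges {S A : Type*}
    [Fintype S] [Fintype A] [Nonempty S] [Nonempty A]
    (r : S → A → ℝ) (γ : ℝ) (hγ0 : 0 ≤ γ) (hγ1 : γ < 1)
    (P : S → A → S → ℝ) (hP0 : ∀ s a s', 0 ≤ P s a s') (hP1 : ∀ s a, (∑ s', P s a s') = 1)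
    (τ : ℝ) (hτ : 0 < τ)
    (β : S → A → ℝ) (hβ0 : ∀ s a, 0 ≤ β s a) (hβ1 : ∀ s, (∑ a, β s a) = 1)
    (pit : ℕ → S → A → ℝ) (qt : ℕ → S → A → ℝ)
    (hpi0_nonneg : ∀ s a, 0 ≤ pit 0 s a) (hpi0_sum : ∀ s, (∑ a, pit 0 s a) = 1)
    (hpi0_sub : ∀ s a, 0 < pit 0 s a → 0 < β s a)
    (heval : ∀ t, qt t = Ton r γ τ P (pit t) (qt t))
    (himprove : ∀ t s a, pit (t + 1) s a =
      if 0 < β s a then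
        Real.exp (qt t s a / τ) /
          ∑ a' ∈ Finset.univ.filter (fun a' => 0 < β s a'), Real.exp (qt t s a' / τ)
      else 0) :
    (∀ t s a, 0 < pit t s a → 0 < β s a) ∧
    (∀ t s a, qt t s a ≤ qt (t + 1) s a) ∧
    (∃ qstar : S → A → ℝ, Tstar r γ τ P β qstar = qstar ∧
      (∀ q : S → A → ℝ, Tstar r γ τ P β q = q → q = qstar) ∧
      (∀ s a, Filter.Tendsto (fun t : ℕ => qt t s a) Filter.atTop (nhds (qstar s a)))) := by
  classical
  have hDne : ∀ s : S, (Finset.univ.filter (fun a => 0 < β s a)).Nonempty := by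
    intro s
    rw [Finset.filter_nonempty_iff]
    by_contra h
    push_neg at h
    have hz : ∀ a ∈ (Finset.univ : Finset A), β s a = 0 := fun a ha =>
      le_antisymm (h a ha) (hβ0 s a)
    have := hβ1 s
    rw [Finset.sum_congr rfl hz, Finset.sum_const_zero] at this
    norm_num at this
  have hfacts : ∀ t s,
      (Finset.univ.filter (fun a => 0 < pit (t+1) s a)) =
        Finset.univ.filter (fun a => 0 < β s a) ∧
      (∀ a, 0 ≤ pit (t+1) s a) ∧
      (∑ a ∈ Finset.univ.filter (fun a => 0 < β s a), pit (t+1) s a = 1) ∧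
      (∑ a ∈ Finset.univ.filter (fun a => 0 < β s a),
          pit (t+1) s a * (qt t s a - τ * Real.log (pit (t+1) s a)) =
        τ * Real.log (∑ a' ∈ Finset.univ.filter (fun a' => 0 < β s a'),
          Real.exp (qt t s a' / τ))) := by
    intro t s
    apply softmax_facts τ hτ _ (hDne s) (qt t s) (pit (t+1) s)
    · intro a ha
      rw [himprove t s a, if_pos ((Finset.mem_filter.1 ha).2)]
    · intro a ha
      rw [himprove t s a, if_neg]
      intro hc
      exact ha (Finset.mem_filter.2 ⟨Finset.mem_univ a, hc⟩)
  have hsupp : ∀ t s a, 0 < pit t s a → 0 < β s a := by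
    intro t
    cases t with
    | zero => exact hpi0_sub
    | succ t =>
      intro s a h
      have h1 := (hfacts t s).1
      have h2 : a ∈ Finset.univ.filter (fun a => 0 < β s a) := by
        rw [← h1]; exact Finset.mem_filter.2 ⟨Finset.mem_univ a, h⟩
      exact (Finset.mem_filter.1 h2).2
  have hnn : ∀ t s a, 0 ≤ pit t s a := by
    intro t
    cases t with
    | zero => exact hpi0_nonneg
    | succ t => intro s a; exact (hfacts t s).2.1 a
  have hsuppsum : ∀ t s, ∑ a ∈ Finset.univ.filter (fun a => 0 < pit t s a), pit t s a = 1 := by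
    intro t s
    cases t with
    | zero =>
      rw [Finset.sum_filter_of_ne (fun a _ h => lt_of_le_of_ne (hpi0_nonneg s a) (Ne.symm h))]
      exact hpi0_sum s
    | succ t =>
      rw [(hfacts t s).1]
      exact (hfacts t s).2.2.1
  have sumP : ∀ (g g' : S → ℝ) (c : ℝ) (s : S) (a : A), (∀ s', g s' ≤ g' s' + c) →
      (∑ s', P s a s' * g s') ≤ (∑ s', P s a s' * g' s') + c := by
    intro g g' c s a h
    calc ∑ s', P s a s' * g s' ≤ ∑ s', P s a s' * (g' s' + c) :=
          Finset.sum_le_sum fun s' _ => mul_le_mul_of_nonneg_left (h s') (hP0 s a s')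
      _ = ∑ s', (P s a s' * g' s' + P s a s' * c) := by
          apply Finset.sum_congr rfl
          intro s' _
          ring
      _ = (∑ s', P s a s' * g' s') + (∑ s', P s a s') * c := by
          rw [Finset.sum_add_distrib, Finset.sum_mul]
      _ = (∑ s', P s a s' * g' s') + c := by rw [hP1 s a, one_mul]
  have TstarLe : ∀ (q q' : S → A → ℝ) (c : ℝ), (∀ s a, q s a ≤ q' s a + c) →
      ∀ s a, Tstar r γ τ P β q s a ≤ Tstar r γ τ P β q' s a + γ * c := by
    intro q q' c h s a
    simp only [Tstar]
    have hs := sumP _ _ c s a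
      (fun s' => lse_le τ hτ _ (hDne s') (q s') (q' s') c (fun a' _ => h s' a'))
    have h2 := mul_le_mul_of_nonneg_left hs hγ0
    rw [mul_add] at h2
    linarith
  have TonLe : ∀ (t : ℕ) (q q' : S → A → ℝ) (c : ℝ), (∀ s a, q s a ≤ q' s a + c) →
      ∀ s a, Ton r γ τ P (pit t) q s a ≤ Ton r γ τ P (pit t) q' s a + γ * c := by
    intro t q q' c h s a
    simp only [Ton]
    have hs := sumP _ _ c s a
      (fun s' => pol_sum_le τ c (pit t s') (hnn t s') (hsuppsum t s') (q s') (q' s')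
        (fun a' => h s' a'))
    have h2 := mul_le_mul_of_nonneg_left hs hγ0
    rw [mul_add] at h2
    linarith
  have key1 : ∀ t s a, qt t s a ≤ Tstar r γ τ P β (qt t) s a := by
    intro t s a
    conv_lhs => rw [heval t]
    simp only [Ton, Tstar]
    have hs : ∀ s' ∈ (Finset.univ : Finset S),
        P s a s' * (∑ a' ∈ Finset.univ.filter (fun a' => 0 < pit t s' a'),
            pit t s' a' * (qt t s' a' - τ * Real.log (pit t s' a'))) ≤
          P s a s' * (τ * Real.log (∑ a' ∈ Finset.univ.filter (fun a' => 0 < β s' a'),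
            Real.exp (qt t s' a' / τ))) := by
      intro s' _
      refine mul_le_mul_of_nonneg_left ?_ (hP0 s a s')
      exact gibbs τ hτ _ (hDne s') (pit t s') (hsuppsum t s')
        (fun a' hp => Finset.mem_filter.2 ⟨Finset.mem_univ _, hsupp t s' a' hp⟩) (qt t s')
    have h1 := Finset.sum_le_sum hs
    have h2 := mul_le_mul_of_nonneg_left h1 hγ0
    linarith
  have key2 : ∀ t s a, Tstar r γ τ P β (qt t) s a = Ton r γ τ P (pit (t+1)) (qt t) s a := by
    intro t s a
    simp only [Tstar, Ton]
    congr 2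
    apply Finset.sum_congr rfl
    intro s' _
    congr 1
    rw [(hfacts t s').1, (hfacts t s').2.2.2]
  have hmono : ∀ t s a, qt t s a ≤ qt (t + 1) s a := by
    intro t
    obtain ⟨p, -, hp⟩ := Finset.exists_min_image (Finset.univ : Finset (S × A))
      (fun p => qt (t+1) p.1 p.2 - qt t p.1 p.2) Finset.univ_nonempty
    set d := qt (t+1) p.1 p.2 - qt t p.1 p.2 with hd
    have hlb : ∀ s a, qt t s a ≤ qt (t+1) s a + (-d) := by
      intro s a
      have := hp (s, a) (Finset.mem_univ _)
      simp only at this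
      linarith
    have step : ∀ s a, qt t s a ≤ qt (t+1) s a + γ * (-d) := by
      intro s a
      calc qt t s a ≤ Tstar r γ τ P β (qt t) s a := key1 t s a
        _ = Ton r γ τ P (pit (t+1)) (qt t) s a := key2 t s a
        _ ≤ Ton r γ τ P (pit (t+1)) (qt (t+1)) s a + γ * (-d) := TonLe (t+1) _ _ _ hlb s a
        _ = qt (t+1) s a + γ * (-d) := by rw [← heval (t+1)]
    have hd0 : 0 ≤ d := by nlinarith [step p.1 p.2]
    intro s a
    have := hp (s, a) (Finset.mem_univ _)
    simp only at this
    linarith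
  have hcontr : ContractingWith ⟨γ, hγ0⟩ (Tstar r γ τ P β) := by
    constructor
    · exact_mod_cast hγ1
    · apply LipschitzWith.of_dist_le_mul
      intro q q'
      have hb : ∀ s a, |q s a - q' s a| ≤ dist q q' := by
        intro s a
        calc |q s a - q' s a| = dist (q s a) (q' s a) := (Real.dist_eq _ _).symm
          _ ≤ dist (q s) (q' s) := dist_le_pi_dist (q s) (q' s) a
          _ ≤ dist q q' := dist_le_pi_dist q q' s
      show dist _ _ ≤ γ * dist q q'
      refine (dist_pi_le_iff (by positivity)).2 fun s => ?_
      refine (dist_pi_le_iff (by positivity)).2 fun a => ?_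
      rw [Real.dist_eq, abs_sub_le_iff]
      constructor
      · have h1 : ∀ s a, q s a ≤ q' s a + dist q q' := by
          intro s a
          have := abs_le.1 (hb s a)
          linarith [this.2]
        linarith [TstarLe q q' (dist q q') h1 s a]
      · have h1 : ∀ s a, q' s a ≤ q s a + dist q q' := by
          intro s a
          have := abs_le.1 (hb s a)
          linarith [this.1]
        linarith [TstarLe q' q (dist q q') h1 s a]
  set qstar := ContractingWith.fixedPoint (Tstar r γ τ P β) hcontr with hqdef
  have hfix : Tstar r γ τ P β qstar = qstar := hcontr.fixedPoint_isFixedPt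
  have hle : ∀ t s a, qt t s a ≤ qstar s a := by
    intro t
    obtain ⟨p, -, hp⟩ := Finset.exists_min_image (Finset.univ : Finset (S × A))
      (fun p => qstar p.1 p.2 - qt t p.1 p.2) Finset.univ_nonempty
    set d := qstar p.1 p.2 - qt t p.1 p.2 with hd
    have hlb : ∀ s a, qt t s a ≤ qstar s a + (-d) := by
      intro s a
      have := hp (s, a) (Finset.mem_univ _)
      simp only at this
      linarith
    have step : ∀ s a, qt t s a ≤ qstar s a + γ * (-d) := by
      intro s a
      calc qt t s a ≤ Tstar r γ τ P β (qt t) s a := key1 t s a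
        _ ≤ Tstar r γ τ P β qstar s a + γ * (-d) := TstarLe _ _ _ hlb s a
        _ = qstar s a + γ * (-d) := by rw [hfix]
    have hd0 : 0 ≤ d := by nlinarith [step p.1 p.2]
    intro s a
    have := hp (s, a) (Finset.mem_univ _)
    simp only at this
    linarith
  have hune : (Finset.univ : Finset (S × A)).Nonempty := Finset.univ_nonempty
  set M : ℕ → ℝ := fun t =>
    (Finset.univ : Finset (S × A)).sup' hune (fun p => qstar p.1 p.2 - qt t p.1 p.2) with hM
  have hMle : ∀ t s a, qstar s a - qt t s a ≤ M t := by
    intro t s a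
    rw [hM]
    exact Finset.le_sup' (fun p : S × A => qstar p.1 p.2 - qt t p.1 p.2) (Finset.mem_univ (s, a))
  have hM0 : ∀ t, 0 ≤ M t := by
    intro t
    obtain ⟨s⟩ := (inferInstance : Nonempty S)
    obtain ⟨a⟩ := (inferInstance : Nonempty A)
    calc (0:ℝ) ≤ qstar s a - qt t s a := by linarith [hle t s a]
      _ ≤ M t := hMle t s a
  have hMstep : ∀ t, M (t+1) ≤ γ * M t := by
    intro t
    rw [hM]
    apply Finset.sup'_le
    rintro ⟨s, a⟩ -
    show qstar s a - qt (t+1) s a ≤ γ * M t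
    have h1 : ∀ s a, qstar s a ≤ qt t s a + M t := fun s a => by linarith [hMle t s a]
    have h2 := TstarLe _ _ _ h1 s a
    rw [hfix] at h2
    have h3 := key2 t s a
    have h4 := TonLe (t+1) (qt t) (qt (t+1)) 0 (fun s a => by linarith [hmono t s a]) s a
    have h5 : Ton r γ τ P (pit (t+1)) (qt (t+1)) s a = qt (t+1) s a :=
      (congrFun (congrFun (heval (t+1)) s) a).symm
    rw [h5] at h4
    rw [h3] at h2
    linarith
  have hgeo : ∀ t, M t ≤ γ ^ t * M 0 := by
    intro t
    induction t with
    | zero => simp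
    | succ t ih =>
      calc M (t+1) ≤ γ * M t := hMstep t
        _ ≤ γ * (γ ^ t * M 0) := mul_le_mul_of_nonneg_left ih hγ0
        _ = γ ^ (t+1) * M 0 := by ring
  refine ⟨hsupp, hmono, qstar, hfix, fun q hq => hcontr.fixedPoint_unique hq, ?_⟩
  intro s a
  have htend : Filter.Tendsto (fun t : ℕ => γ ^ t * M 0) Filter.atTop (nhds 0) := by
    have h := tendsto_pow_atTop_nhds_zero_of_lt_one hγ0 hγ1
    simpa using h.mul_const (M 0)
  have hsq : Filter.Tendsto (fun t : ℕ => qstar s a - qt t s a) Filter.atTop (nhds 0) := by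
    apply squeeze_zero (fun t => by linarith [hle t s a])
      (fun t => le_trans (hMle t s a) (hgeo t)) htend
  have h2 := Filter.Tendsto.const_sub (qstar s a) hsq
  simpa using h2
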